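/- Let p be an odd prime, g and k positive integers, and let Ω be the 2g×2g block matrix [[0, -I_g],[I_g, 0]] over ℤ/p^kℤ. Suppose H is a nilpotent subgroup of GL_{2g}(ℤ/p^kℤ) such that (i) every M ∈ H satisfies Mᵀ Ω M = λ Ω for some unit λ ∈ (ℤ/p^kℤ)ˣ, and (ii) H contains every matrix M ∈ GL_{2g}(ℤ/p^kℤ) satisfying Mᵀ Ω M = λ Ω for some unit λ whose reduction modulo p^{k-1} is the identity. Then for every M ∈ H and every unit λ with Mᵀ Ω M = λ Ω, the reduction of λ modulo p is a square in ℤ/pℤ; in particular, the multiplier map M ↦ λ on H does not surject onto (ℤ/p^kℤ)ˣ. -/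

import Mathlib

open scoped commutatorElement
open scoped Matrix

/-- The standard symplectic form `Ω = [[0, -I_g], [I_g, 0]]` over `ℤ/Nℤ`. -/
def symplecticForm (g N : ℕ) : Matrix (Fin g ⊕ Fin g) (Fin g ⊕ Fin g) (ZMod N) :=
  Matrix.fromBlocks 0 (-1) 1 0

namespace MultAux

open Matrix

variable {g N : ℕ}

lemma J_mul_J : symplecticForm g N * symplecticForm g N = -1 := by
  rw [symplecticForm, Matrix.fromBlocks_multiply, ← Matrix.fromBlocks_one,
    Matrix.fromBlocks_neg]
  simp

lemma J_transpose : (symplecticForm g N)ᵀ = -symplecticForm g N := by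
  rw [symplecticForm, Matrix.fromBlocks_transpose, Matrix.fromBlocks_neg]
  simp

/-- `N(S) = 1 + ε • (−J * S)`. -/
def Nmat (g N : ℕ) (ε : ZMod N) (S : Matrix (Fin g ⊕ Fin g) (Fin g ⊕ Fin g) (ZMod N)) :
    Matrix (Fin g ⊕ Fin g) (Fin g ⊕ Fin g) (ZMod N) :=
  1 + ε • (-(symplecticForm g N) * S)

lemma Nmat_zero (ε : ZMod N) : Nmat g N ε 0 = 1 := by simp [Nmat]

lemma Nmat_mul {ε : ZMod N} (hε : ε * ε = 0) (S T) :
    Nmat g N ε S * Nmat g N ε T = Nmat g N ε (S + T) := by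
  unfold Nmat
  rw [add_mul, one_mul, mul_add, mul_one, smul_mul_assoc, mul_smul_comm, smul_smul, hε,
    zero_smul, mul_add, smul_add]
  abel

lemma Nmat_transpose {ε : ZMod N} {S} (hS : Sᵀ = S) :
    (Nmat g N ε S)ᵀ = 1 + ε • (S * symplecticForm g N) := by
  unfold Nmat
  rw [transpose_add, transpose_one, transpose_smul, transpose_mul, transpose_neg, J_transpose,
    neg_neg, hS]

lemma Nmat_similitude {ε : ZMod N} (hε : ε * ε = 0) {S} (hS : Sᵀ = S) :
    (Nmat g N ε S)ᵀ * symplecticForm g N * Nmat g N ε S = symplecticForm g N := by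
  rw [Nmat_transpose hS]
  unfold Nmat
  rw [add_mul, one_mul, smul_mul_assoc, mul_assoc S, J_mul_J, mul_neg_one, mul_add, mul_one,
    add_mul]
  have h2 : symplecticForm g N * (symplecticForm g N * S) = -S := by
    rw [← mul_assoc, J_mul_J, neg_one_mul]
  simp only [smul_mul_assoc, mul_smul_comm, smul_smul, hε, zero_smul, smul_zero, add_zero, h2,
    smul_neg, neg_smul, neg_mul, mul_neg, neg_neg, one_smul, neg_one_smul]
  abel

lemma Nmat_conj {ε : ZMod N} {M W : Matrix (Fin g ⊕ Fin g) (Fin g ⊕ Fin g) (ZMod N)}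
    (hMW : M * W = 1) (lam : ZMod N)
    (hMJ : M * symplecticForm g N = lam • (symplecticForm g N * Wᵀ)) (S) :
    M * Nmat g N ε S * W = Nmat g N ε (lam • (Wᵀ * S * W)) := by
  unfold Nmat
  rw [mul_add, mul_one, add_mul, hMW]
  congr 1
  rw [mul_smul_comm, smul_mul_assoc, mul_smul_comm]
  congr 1
  simp only [neg_mul, mul_neg, smul_neg, neg_mul]
  rw [neg_inj]
  rw [← mul_assoc, hMJ, smul_mul_assoc, smul_mul_assoc]
  congr 1
  simp [mul_assoc]

/-- From the similitude relation derive `M * J = lam • (J * Wᵀ)`. -/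
lemma similitude_key {M W : Matrix (Fin g ⊕ Fin g) (Fin g ⊕ Fin g) (ZMod N)}
    (hMW : M * W = 1) {lam : ZMod N}
    (hsim : Mᵀ * symplecticForm g N * M = lam • symplecticForm g N) :
    M * symplecticForm g N = lam • (symplecticForm g N * Wᵀ) := by
  have h1 : Mᵀ * symplecticForm g N = lam • (symplecticForm g N * W) := by
    have := congrArg (fun X => X * W) hsim
    simpa [mul_assoc, hMW, smul_mul_assoc] using this
  have h2 : Mᵀ = lam • (symplecticForm g N * W * -(symplecticForm g N)) := by
    have := congrArg (fun X => X * -(symplecticForm g N)) h1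
    simp only [smul_mul_assoc] at this
    rw [mul_assoc, mul_neg, J_mul_J, neg_neg, mul_one] at this
    exact this
  have h3 := congrArg Matrix.transpose h2
  rw [transpose_transpose, transpose_smul, transpose_mul, transpose_mul, transpose_neg,
    J_transpose, neg_neg] at h3
  rw [h3, smul_mul_assoc]
  congr 1
  rw [mul_assoc, mul_assoc, neg_mul, J_mul_J, neg_neg, mul_one]

/-- Unipotent upper-triangular block matrix. -/
def ubm (g N : ℕ) (B : Matrix (Fin g) (Fin g) (ZMod N)) :
    Matrix (Fin g ⊕ Fin g) (Fin g ⊕ Fin g) (ZMod N) :=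
  Matrix.fromBlocks 1 B 0 1

def ym (g N : ℕ) : Matrix (Fin g ⊕ Fin g) (Fin g ⊕ Fin g) (ZMod N) :=
  Matrix.fromBlocks (-1) 0 0 1

lemma ub_zero : ubm g N 0 = 1 := by
  rw [ubm, ← Matrix.fromBlocks_one]

lemma ub_mul (B C : Matrix (Fin g) (Fin g) (ZMod N)) :
    ubm g N B * ubm g N C = ubm g N (B + C) := by
  simp [ubm, Matrix.fromBlocks_multiply, add_comm]

lemma ub_sim {B : Matrix (Fin g) (Fin g) (ZMod N)} (hB : Bᵀ = B) :
    (ubm g N B)ᵀ * symplecticForm g N * ubm g N B = symplecticForm g N := by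
  simp [ubm, symplecticForm, Matrix.fromBlocks_transpose, Matrix.fromBlocks_multiply, hB]

lemma y_mul_y : ym g N * ym g N = 1 := by
  simp [ym, Matrix.fromBlocks_multiply, ← Matrix.fromBlocks_one]

lemma y_sim : (ym g N)ᵀ * symplecticForm g N * ym g N = (-1 : ZMod N) • symplecticForm g N := by
  simp [ym, symplecticForm, Matrix.fromBlocks_transpose, Matrix.fromBlocks_multiply,
    Matrix.fromBlocks_smul]
  rw [Matrix.fromBlocks_neg]
  simp

lemma y_conj (B : Matrix (Fin g) (Fin g) (ZMod N)) :
    ym g N * ubm g N B * ym g N = ubm g N (-B) := by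
  simp [ym, ubm, Matrix.fromBlocks_multiply]

/-- In a nilpotent subgroup, iterated commutators with a fixed element eventually die. -/
lemma iterate_commutator_eq_one {G : Type*} [Group G] (H : Subgroup G)
    {n : ℕ} (hn : (⊤ : Subgroup H).lowerCentralSeries n = ⊥) {V : Type*} (σ : V → V) (f : V → G) (m : G)
    (hm : m ∈ H) (hf : ∀ v, f v ∈ H) (hcomm : ∀ v, ⁅f v, m⁆ = f (σ v)) (v₀ : V) :
    f (σ^[n] v₀) = 1 := by
  let x : ℕ → H := fun j => Nat.rec ⟨f v₀, hf v₀⟩ (fun _ a => ⁅a, ⟨m, hm⟩⁆) j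
  have key : ∀ j, ((x j).1 = f (σ^[j] v₀)) ∧ x j ∈ (⊤ : Subgroup H).lowerCentralSeries j := by
    intro j
    induction j with
    | zero => exact ⟨rfl, Subgroup.mem_top _⟩
    | succ j ih =>
      have hx : x (j + 1) = ⁅x j, (⟨m, hm⟩ : H)⁆ := rfl
      constructor
      · have hcoe : (x (j + 1)).1 = ⁅(x j).1, m⁆ := by
          rw [hx]; simp [commutatorElement_def]
        rw [hcoe, ih.1, hcomm, Function.iterate_succ_apply']
      · rw [hx, Subgroup.lowerCentralSeries_succ]
        exact Subgroup.subset_closure ⟨x j, ih.2, ⟨m, hm⟩, Subgroup.mem_top _, rfl⟩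
  have h1 : x n = 1 := by
    have h2 := (key n).2
    rw [hn] at h2
    exact Subgroup.mem_bot.mp h2
  rw [← (key n).1, h1, OneMemClass.coe_one]

lemma eps_mul_eq_zero {p k : ℕ} (hp : p.Prime) (hk : 0 < k) (x : ZMod (p ^ k))
    (h : (p : ZMod (p ^ k)) ^ (k - 1) * x = 0) :
    ZMod.castHom (dvd_pow_self p hk.ne') (ZMod p) x = 0 := by
  haveI : NeZero (p ^ k) := ⟨pow_ne_zero _ hp.pos.ne'⟩
  have hx : x = ((x.val : ℕ) : ZMod (p ^ k)) := (ZMod.natCast_rightInverse x).symm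
  rw [hx, ← Nat.cast_pow, ← Nat.cast_mul] at h
  have hdvd : p ^ k ∣ p ^ (k - 1) * x.val := (ZMod.natCast_eq_zero_iff _ _).mp h
  have hk' : p ^ k = p ^ (k - 1) * p := by
    rw [← pow_succ]
    congr 1
    omega
  have hpv : p ∣ x.val := by
    have h3 := hdvd
    generalize x.val = v at h3
    rw [hk'] at h3
    exact (Nat.mul_dvd_mul_iff_left (pow_pos hp.pos (k - 1))).mp h3
  rw [hx, map_natCast]
  exact (ZMod.natCast_eq_zero_iff _ _).mpr hpv

lemma two_pow_ne_zero {p k : ℕ} (hp : p.Prime) (hodd : Odd p) (hk : 0 < k) (n : ℕ) :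
    ((2 : ZMod (p ^ k)) ^ n) ≠ 0 := by
  intro h
  have h2 : (((2 ^ n : ℕ) : ZMod (p ^ k))) = 0 := by push_cast; exact h
  have hdvd : p ^ k ∣ 2 ^ n := (ZMod.natCast_eq_zero_iff _ _).mp h2
  have hpd : p ∣ 2 ^ n := dvd_trans (dvd_pow_self p hk.ne') hdvd
  have hp2 : p = 2 := (Nat.prime_dvd_prime_iff_eq hp Nat.prime_two).mp
    (Nat.Prime.dvd_of_dvd_pow hp hpd)
  exact absurd (hp2 ▸ hodd) (by decide)

lemma isSquare_of_unipotent {p : ℕ} [Fact p.Prime] {ι : Type*} [DecidableEq ι] [Fintype ι]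
    [Nonempty ι] (c : ZMod p) (P : Matrix ι ι (ZMod p)) (n : ℕ)
    (h : ∀ S : Matrix ι ι (ZMod p), Sᵀ = S →
      (fun S : Matrix ι ι (ZMod p) => S - c • (Pᵀ * S * P))^[n] S = 0) :
    IsSquare c := by
  classical
  set Sym : Submodule (ZMod p) (Matrix ι ι (ZMod p)) :=
    { carrier := {S | Sᵀ = S}
      add_mem' := fun {a b} ha hb => by
        simp only [Set.mem_setOf_eq, transpose_add] at *
        rw [ha, hb]
      zero_mem' := transpose_zero
      smul_mem' := fun r {a} ha => by
        simp only [Set.mem_setOf_eq, transpose_smul] at *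
        rw [ha] } with hSym
  have memSym : ∀ S : Matrix ι ι (ZMod p), S ∈ Sym ↔ Sᵀ = S := fun S => Iff.rfl
  set T : Module.End (ZMod p) Sym :=
    { toFun := fun S => ⟨c • (Pᵀ * S.1 * P), by
        have hS := (memSym S.1).mp S.2
        rw [memSym, transpose_smul, transpose_mul, transpose_mul, transpose_transpose, mul_assoc,
          hS]⟩
      map_add' := fun a b => by
        apply Subtype.ext
        simp [mul_add, add_mul, smul_add]
      map_smul' := fun r a => by
        apply Subtype.ext
        simp [Matrix.mul_smul, Matrix.smul_mul, smul_comm r c] } with hT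
  have hTval : ∀ S : Sym, (T S).1 = c • (Pᵀ * S.1 * P) := fun S => rfl
  have hiter : ∀ (j : ℕ) (S : Sym), (((1 - T) ^ j) S).1 =
      (fun S : Matrix ι ι (ZMod p) => S - c • (Pᵀ * S * P))^[j] S.1 := by
    intro j
    induction j with
    | zero => intro S; rfl
    | succ j ih =>
      intro S
      rw [pow_succ', Module.End.mul_apply, Function.iterate_succ_apply', LinearMap.sub_apply,
        Module.End.one_apply, Submodule.coe_sub, hTval, ih]
  have hnu : (1 - T) ^ n = 0 := by
    apply LinearMap.ext
    intro S
    apply Subtype.ext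
    rw [hiter n S, LinearMap.zero_apply, Submodule.coe_zero]
    exact h S.1 ((memSym S.1).mp S.2)
  obtain ⟨i0⟩ := ‹Nonempty ι›
  have hone : ((⟨1, transpose_one⟩ : Sym) : Matrix ι ι (ZMod p)) ≠ 0 := by
    intro h10
    have := congrFun (congrFun h10 i0) i0
    simp at this
  haveI : Nontrivial Sym := ⟨⟨⟨1, transpose_one⟩, 0, fun h10 => hone (by rw [h10]; rfl)⟩⟩
  haveI : Nontrivial (Module.End (ZMod p) Sym) := ⟨1, 0, fun h10 => by
    have := congrArg (fun f : Module.End (ZMod p) Sym => (f ⟨1, transpose_one⟩ : Sym).1) h10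
    simp only [Module.End.one_apply, LinearMap.zero_apply] at this
    exact hone (by simpa using this)⟩
  haveI : CharP (Module.End (ZMod p) Sym) p :=
    charP_of_injective_ringHom (algebraMap (ZMod p) (Module.End (ZMod p) Sym)).injective p
  have hle : n ≤ p ^ n := (Nat.lt_pow_self (n := n) (Fact.out (p := p.Prime)).one_lt).le
  have hTpow : T ^ (p ^ n) = 1 := by
    calc T ^ (p ^ n) = (1 - (1 - T)) ^ (p ^ n) := by rw [sub_sub_cancel]
      _ = 1 ^ (p ^ n) - (1 - T) ^ (p ^ n) :=
          sub_pow_char_pow_of_commute _ _ (Commute.one_left _)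
      _ = 1 - ((1 - T) ^ n * (1 - T) ^ (p ^ n - n)) := by
          rw [one_pow, ← pow_add, Nat.add_sub_cancel' hle]
      _ = 1 := by rw [hnu, zero_mul, sub_zero]
  have hTj : ∀ (j : ℕ) (S : Sym), ((T ^ j) S).1 = c ^ j • ((P ^ j)ᵀ * S.1 * P ^ j) := by
    intro j
    induction j with
    | zero => intro S; simp
    | succ j ih =>
      intro S
      rw [pow_succ, Module.End.mul_apply, ih, hTval, pow_succ c, pow_succ' P, transpose_mul]
      simp only [Matrix.mul_smul, Matrix.smul_mul, smul_smul, mul_assoc, mul_comm (c ^ j) c]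
  have hEsym : (Matrix.single i0 i0 (1 : ZMod p))ᵀ = Matrix.single i0 i0 1 := by
    ext a b
    simp [Matrix.single, Matrix.transpose_apply, and_comm]
  have happ := congrArg (fun f : Module.End (ZMod p) Sym =>
    (f ⟨Matrix.single i0 i0 1, (memSym _).mpr hEsym⟩).1) hTpow
  simp only [Module.End.one_apply] at happ
  rw [hTj] at happ
  have hcoe : ((⟨Matrix.single i0 i0 1, (memSym _).mpr hEsym⟩ : Sym) :
      Matrix ι ι (ZMod p)) = Matrix.single i0 i0 1 := rfl
  rw [hcoe] at happ
  have hcN : c ^ (p ^ n) = c := ZMod.pow_card_pow c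
  set Q := P ^ (p ^ n) with hQ
  have hentry := congrFun (congrFun happ i0) i0
  rw [Matrix.smul_apply, hcN] at hentry
  have hmul : (Qᵀ * Matrix.single i0 i0 (1 : ZMod p) * Q : Matrix ι ι (ZMod p)) i0 i0
      = Q i0 i0 * Q i0 i0 := by
    rw [Matrix.mul_apply]
    rw [Finset.sum_eq_single i0]
    · rw [Matrix.mul_single_apply_same, Matrix.transpose_apply, mul_one]
    · intro b _ hb
      rw [Matrix.mul_single_apply_of_ne (hbj := hb), zero_mul]
    · intro habs
      exact absurd (Finset.mem_univ i0) habs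
  rw [hmul, Matrix.single_apply_same, smul_eq_mul] at hentry
  refine ⟨c * Q i0 i0, ?_⟩
  have h2 : c * Q i0 i0 * (c * Q i0 i0) = c * (c * (Q i0 i0 * Q i0 i0)) := by ring
  rw [h2, hentry, mul_one]

end MultAux

/-- Let `p` be an odd prime, `g, k` positive integers and `Ω` the standard symplectic form
over `ℤ/p^kℤ`.  If `H` is a nilpotent subgroup of `GL_{2g}(ℤ/p^kℤ)` consisting of symplectic
similitudes and containing every symplectic similitude that reduces to the identity modulo
`p^(k-1)`, then every multiplier of an element of `H` is a square modulo `p`; in particular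
the multiplier map on `H` does not surject onto `(ℤ/p^kℤ)ˣ`. -/
theorem multiplier_not_surjective_of_nilpotent (p g k : ℕ) (hp : p.Prime) (hodd : Odd p)
    (hg : 0 < g) (hk : 0 < k)
    (H : Subgroup (GL (Fin g ⊕ Fin g) (ZMod (p ^ k))))
    (hnil : Group.IsNilpotent H)
    (hGSp : ∀ M ∈ H, ∃ lam : (ZMod (p ^ k))ˣ,
      (M : Matrix (Fin g ⊕ Fin g) (Fin g ⊕ Fin g) (ZMod (p ^ k)))ᵀ * symplecticForm g (p ^ k) * M
        = (lam : ZMod (p ^ k)) • symplecticForm g (p ^ k))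
    (hfull : ∀ M : GL (Fin g ⊕ Fin g) (ZMod (p ^ k)),
      (∃ lam : (ZMod (p ^ k))ˣ,
        (M : Matrix (Fin g ⊕ Fin g) (Fin g ⊕ Fin g) (ZMod (p ^ k)))ᵀ * symplecticForm g (p ^ k) * M
          = (lam : ZMod (p ^ k)) • symplecticForm g (p ^ k)) →
      (M : Matrix (Fin g ⊕ Fin g) (Fin g ⊕ Fin g) (ZMod (p ^ k))).map
          (ZMod.castHom (pow_dvd_pow p (Nat.sub_le k 1)) (ZMod (p ^ (k - 1)))) = 1 →
        M ∈ H) :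
    (∀ M ∈ H, ∀ lam : (ZMod (p ^ k))ˣ,
      (M : Matrix (Fin g ⊕ Fin g) (Fin g ⊕ Fin g) (ZMod (p ^ k)))ᵀ * symplecticForm g (p ^ k) * M
          = (lam : ZMod (p ^ k)) • symplecticForm g (p ^ k) →
        IsSquare (ZMod.castHom (dvd_pow_self p hk.ne') (ZMod p) (lam : ZMod (p ^ k)))) ∧
      ¬ ∀ u : (ZMod (p ^ k))ˣ, ∃ M ∈ H,
        (M : Matrix (Fin g ⊕ Fin g) (Fin g ⊕ Fin g) (ZMod (p ^ k)))ᵀ * symplecticForm g (p ^ k) * M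
          = (u : ZMod (p ^ k)) • symplecticForm g (p ^ k) := by
  haveI : Fact p.Prime := ⟨hp⟩
  haveI : NeZero (p ^ k) := ⟨pow_ne_zero _ hp.pos.ne'⟩
  obtain ⟨n, hn⟩ := nilpotent_iff_lowerCentralSeries.mp hnil
  have partA : ∀ M ∈ H, ∀ lam : (ZMod (p ^ k))ˣ,
      (M : Matrix (Fin g ⊕ Fin g) (Fin g ⊕ Fin g) (ZMod (p ^ k)))ᵀ * symplecticForm g (p ^ k) * M
          = (lam : ZMod (p ^ k)) • symplecticForm g (p ^ k) →
        IsSquare (ZMod.castHom (dvd_pow_self p hk.ne') (ZMod p) (lam : ZMod (p ^ k))) := by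
    intro M hM lam hsim
    by_cases hk1 : k = 1
    · -- k = 1 : the hypotheses are contradictory
      exfalso
      haveI hss : Subsingleton (ZMod (p ^ (k - 1))) := by
        have h1 : p ^ (k - 1) = 1 := by rw [hk1]; norm_num
        rw [h1]
        infer_instance
      -- the two generating elements
      let yU : GL (Fin g ⊕ Fin g) (ZMod (p ^ k)) :=
        ⟨MultAux.ym g (p ^ k), MultAux.ym g (p ^ k), MultAux.y_mul_y, MultAux.y_mul_y⟩
      have hymem : yU ∈ H := by
        apply hfull yU ⟨-1, ?_⟩ (Subsingleton.elim _ _)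
        show (MultAux.ym g (p ^ k))ᵀ * symplecticForm g (p ^ k) * MultAux.ym g (p ^ k) = _
        rw [MultAux.y_sim]
        norm_num
      let ubU : {B : Matrix (Fin g) (Fin g) (ZMod (p ^ k)) // Bᵀ = B} →
          GL (Fin g ⊕ Fin g) (ZMod (p ^ k)) := fun v =>
        ⟨MultAux.ubm g (p ^ k) v.1, MultAux.ubm g (p ^ k) (-v.1),
          by rw [MultAux.ub_mul, add_neg_cancel, MultAux.ub_zero],
          by rw [MultAux.ub_mul, neg_add_cancel, MultAux.ub_zero]⟩
      have hubmem : ∀ v, ubU v ∈ H := by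
        intro v
        apply hfull (ubU v) ⟨1, ?_⟩ (Subsingleton.elim _ _)
        show (MultAux.ubm g (p ^ k) v.1)ᵀ * symplecticForm g (p ^ k) * MultAux.ubm g (p ^ k) v.1
          = _
        rw [MultAux.ub_sim v.2]
        simp
      -- doubling dynamics
      let σ1 : {B : Matrix (Fin g) (Fin g) (ZMod (p ^ k)) // Bᵀ = B} →
          {B : Matrix (Fin g) (Fin g) (ZMod (p ^ k)) // Bᵀ = B} := fun v =>
        ⟨v.1 + v.1, by rw [Matrix.transpose_add, v.2]⟩
      have hcomm : ∀ v, ⁅ubU v, yU⁆ = ubU (σ1 v) := by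
        intro v
        apply Units.ext
        show MultAux.ubm g (p ^ k) v.1 * MultAux.ym g (p ^ k) * MultAux.ubm g (p ^ k) (-v.1) *
            MultAux.ym g (p ^ k) = MultAux.ubm g (p ^ k) (σ1 v).1
        have h5 : MultAux.ym g (p ^ k) * (MultAux.ubm g (p ^ k) (-v.1) * MultAux.ym g (p ^ k))
            = MultAux.ubm g (p ^ k) v.1 := by
          rw [← mul_assoc, MultAux.y_conj, neg_neg]
        rw [mul_assoc, mul_assoc, h5, MultAux.ub_mul]
      have hend := MultAux.iterate_commutator_eq_one H hn σ1 (fun v => (ubU v :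
        GL (Fin g ⊕ Fin g) (ZMod (p ^ k)))) yU hymem (fun v => hubmem v) hcomm
        ⟨1, Matrix.transpose_one⟩
      have hval : ∀ j, ((σ1^[j] (⟨1, Matrix.transpose_one⟩ :
          {B : Matrix (Fin g) (Fin g) (ZMod (p ^ k)) // Bᵀ = B})).1)
          = ((2 : ZMod (p ^ k)) ^ j • (1 : Matrix (Fin g) (Fin g) (ZMod (p ^ k)))) := by
        intro j
        induction j with
        | zero => simp
        | succ j ih =>
          rw [Function.iterate_succ_apply']
          have hstep : (σ1 (σ1^[j] ⟨1, Matrix.transpose_one⟩)).1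
              = (σ1^[j] ⟨1, Matrix.transpose_one⟩).1 + (σ1^[j] ⟨1, Matrix.transpose_one⟩).1 :=
            rfl
          rw [hstep, ih, ← add_smul]
          congr 1
          ring
      have h1 : MultAux.ubm g (p ^ k)
          ((σ1^[n] (⟨1, Matrix.transpose_one⟩ :
            {B : Matrix (Fin g) (Fin g) (ZMod (p ^ k)) // Bᵀ = B})).1) = 1 := by
        have := congrArg Units.val hend
        exact this
      rw [hval n] at h1
      have h2 := congrFun (congrFun h1 (Sum.inl ⟨0, hg⟩)) (Sum.inr ⟨0, hg⟩)
      rw [MultAux.ubm] at h2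
      rw [Matrix.fromBlocks_apply₁₂] at h2
      rw [Matrix.smul_apply, Matrix.one_apply_eq, Matrix.one_apply_ne (by simp), smul_eq_mul,
        mul_one] at h2
      exact MultAux.two_pow_ne_zero hp hodd hk n h2
    · -- k ≥ 2 : the main argument
      have hk2 : 2 ≤ k := by omega
      haveI : Nonempty (Fin g ⊕ Fin g) := ⟨Sum.inl ⟨0, hg⟩⟩
      set ε : ZMod (p ^ k) := (p : ZMod (p ^ k)) ^ (k - 1) with hεdef
      have hε2 : ε * ε = 0 := by
        rw [hεdef, ← pow_add, ← Nat.cast_pow, ZMod.natCast_eq_zero_iff]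
        exact pow_dvd_pow p (by omega)
      set W : Matrix (Fin g ⊕ Fin g) (Fin g ⊕ Fin g) (ZMod (p ^ k)) :=
        ((M⁻¹ : GL (Fin g ⊕ Fin g) (ZMod (p ^ k))) :
          Matrix (Fin g ⊕ Fin g) (Fin g ⊕ Fin g) (ZMod (p ^ k))) with hWdef
      have hMW : (M : Matrix (Fin g ⊕ Fin g) (Fin g ⊕ Fin g) (ZMod (p ^ k))) * W = 1 :=
        Units.mul_inv M
      have hMJ : (M : Matrix (Fin g ⊕ Fin g) (Fin g ⊕ Fin g) (ZMod (p ^ k))) *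
          symplecticForm g (p ^ k)
          = (lam : ZMod (p ^ k)) • (symplecticForm g (p ^ k) * Wᵀ) :=
        MultAux.similitude_key hMW hsim
      -- the family of unipotent similitudes
      let NU : {S : Matrix (Fin g ⊕ Fin g) (Fin g ⊕ Fin g) (ZMod (p ^ k)) // Sᵀ = S} →
          GL (Fin g ⊕ Fin g) (ZMod (p ^ k)) := fun v =>
        ⟨MultAux.Nmat g (p ^ k) ε v.1, MultAux.Nmat g (p ^ k) ε (-v.1),
          by rw [MultAux.Nmat_mul hε2, add_neg_cancel, MultAux.Nmat_zero],
          by rw [MultAux.Nmat_mul hε2, neg_add_cancel, MultAux.Nmat_zero]⟩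
      have hNUmem : ∀ v, NU v ∈ H := by
        intro v
        apply hfull (NU v) ⟨1, ?_⟩ ?_
        · show (MultAux.Nmat g (p ^ k) ε v.1)ᵀ * symplecticForm g (p ^ k) *
              MultAux.Nmat g (p ^ k) ε v.1 = _
          rw [MultAux.Nmat_similitude hε2 v.2]
          simp
        · -- reduction mod p^(k-1) is trivial
          show (MultAux.Nmat g (p ^ k) ε v.1).map
            (ZMod.castHom (pow_dvd_pow p (Nat.sub_le k 1)) (ZMod (p ^ (k - 1)))) = 1
          have hρε : (ZMod.castHom (pow_dvd_pow p (Nat.sub_le k 1)) (ZMod (p ^ (k - 1)))) ε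
              = 0 := by
            rw [hεdef, map_pow, map_natCast, ← Nat.cast_pow, ZMod.natCast_self]
          ext i j
          rw [MultAux.Nmat, Matrix.map_apply, Matrix.add_apply, Matrix.smul_apply, map_add,
            smul_eq_mul, map_mul, hρε, zero_mul, add_zero]
          by_cases hij : i = j
          · subst hij
            rw [Matrix.one_apply_eq, Matrix.one_apply_eq, map_one]
          · rw [Matrix.one_apply_ne hij, Matrix.one_apply_ne hij, map_zero]
      -- the twisted congruence dynamics
      let σ2 : {S : Matrix (Fin g ⊕ Fin g) (Fin g ⊕ Fin g) (ZMod (p ^ k)) // Sᵀ = S} →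
          {S : Matrix (Fin g ⊕ Fin g) (Fin g ⊕ Fin g) (ZMod (p ^ k)) // Sᵀ = S} := fun v =>
        ⟨v.1 - (lam : ZMod (p ^ k)) • (Wᵀ * v.1 * W), by
          rw [Matrix.transpose_sub, Matrix.transpose_smul, Matrix.transpose_mul,
            Matrix.transpose_mul, Matrix.transpose_transpose, v.2, mul_assoc]⟩
      have hcomm : ∀ v, ⁅NU v, M⁆ = NU (σ2 v) := by
        intro v
        apply Units.ext
        show MultAux.Nmat g (p ^ k) ε v.1 *
            (M : Matrix (Fin g ⊕ Fin g) (Fin g ⊕ Fin g) (ZMod (p ^ k))) *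
            MultAux.Nmat g (p ^ k) ε (-v.1) * W = MultAux.Nmat g (p ^ k) ε (σ2 v).1
        have h5 : (M : Matrix (Fin g ⊕ Fin g) (Fin g ⊕ Fin g) (ZMod (p ^ k))) *
            (MultAux.Nmat g (p ^ k) ε (-v.1) * W)
            = MultAux.Nmat g (p ^ k) ε ((lam : ZMod (p ^ k)) • (Wᵀ * (-v.1) * W)) := by
          rw [← mul_assoc]
          exact MultAux.Nmat_conj hMW _ hMJ (-v.1)
        rw [mul_assoc, mul_assoc, h5, MultAux.Nmat_mul hε2]
        congr 1
        rw [mul_neg, neg_mul, smul_neg, ← sub_eq_add_neg]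
      have hend := MultAux.iterate_commutator_eq_one H hn σ2 (fun v => (NU v :
        GL (Fin g ⊕ Fin g) (ZMod (p ^ k)))) M hM hNUmem hcomm
      -- pass to the residue field
      set π : ZMod (p ^ k) →+* ZMod p := ZMod.castHom (dvd_pow_self p hk.ne') (ZMod p)
        with hπdef
      set c : ZMod p := π (lam : ZMod (p ^ k)) with hcdef
      set Pm : Matrix (Fin g ⊕ Fin g) (Fin g ⊕ Fin g) (ZMod p) := W.map π with hPmdef
      have hsmulmap : ∀ (a : ZMod (p ^ k))
          (X : Matrix (Fin g ⊕ Fin g) (Fin g ⊕ Fin g) (ZMod (p ^ k))),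
          (a • X).map π = π a • X.map π := by
        intro a X
        ext i j
        simp [Matrix.map_apply, Matrix.smul_apply, smul_eq_mul]
      have hσmap : ∀ v, ((σ2 v).1).map π
          = (v.1.map π) - c • (Pmᵀ * (v.1.map π) * Pm) := by
        intro v
        show ((v.1 - (lam : ZMod (p ^ k)) • (Wᵀ * v.1 * W)).map π) = _
        rw [Matrix.map_sub π (fun a b => map_sub π a b), hsmulmap, Matrix.map_mul,
          Matrix.map_mul, Matrix.transpose_map, hcdef, hPmdef]
      -- iterates vanish mod p
      have hiterzero : ∀ (SF : Matrix (Fin g ⊕ Fin g) (Fin g ⊕ Fin g) (ZMod p)), SFᵀ = SF →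
          (fun Z : Matrix (Fin g ⊕ Fin g) (Fin g ⊕ Fin g) (ZMod p) =>
            Z - c • (Pmᵀ * Z * Pm))^[n] SF = 0 := by
        intro SF hSF
        -- lift SF to a symmetric matrix over ZMod (p^k)
        set lift : ZMod p → ZMod (p ^ k) := fun a => ((a.val : ℕ) : ZMod (p ^ k)) with hliftdef
        have hliftπ : ∀ a : ZMod p, π (lift a) = a := by
          intro a
          rw [hliftdef, map_natCast]
          exact ZMod.natCast_rightInverse a
        set v0 : {S : Matrix (Fin g ⊕ Fin g) (Fin g ⊕ Fin g) (ZMod (p ^ k)) // Sᵀ = S} :=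
          ⟨SF.map lift, by rw [← Matrix.transpose_map, hSF]⟩ with hv0def
        have hv0π : (v0.1).map π = SF := by
          ext i j
          exact hliftπ (SF i j)
        -- the commutator iterate is trivial
        have h6 := hend v0
        have h7 : MultAux.Nmat g (p ^ k) ε ((σ2^[n] v0).1) = 1 := congrArg Units.val h6
        -- hence the iterate is divisible by p
        have h8 : ε • ((σ2^[n] v0).1) = 0 := by
          have h9 : ε • (-(symplecticForm g (p ^ k)) * (σ2^[n] v0).1) = 0 := by
            have := h7
            rw [MultAux.Nmat] at this
            -- 1 + x = 1
            have h10 := congrArg (fun X => X - 1) this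
            simpa using h10
          have h11 := congrArg (fun X => symplecticForm g (p ^ k) * X) h9
          simp only [mul_smul_comm, Matrix.mul_zero] at h11
          rw [neg_mul, mul_neg, ← mul_assoc, MultAux.J_mul_J, neg_one_mul, neg_neg] at h11
          exact h11
        have h12 : ((σ2^[n] v0).1).map π = 0 := by
          ext i j
          have h13 := congrFun (congrFun h8 i) j
          rw [Matrix.smul_apply, smul_eq_mul] at h13
          rw [Matrix.map_apply, hπdef]
          have h14 := MultAux.eps_mul_eq_zero hp hk _ (by rw [← hεdef]; exact h13)
          simpa using h14
        -- transport through π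
        have h15 : ∀ j, ((σ2^[j] v0).1).map π
            = (fun Z : Matrix (Fin g ⊕ Fin g) (Fin g ⊕ Fin g) (ZMod p) =>
              Z - c • (Pmᵀ * Z * Pm))^[j] SF := by
          intro j
          induction j with
          | zero => exact hv0π
          | succ j ih =>
            rw [Function.iterate_succ_apply', Function.iterate_succ_apply', hσmap, ih]
        rw [← h15 n]
        exact h12
      -- conclude with the linear-algebra lemma
      exact MultAux.isSquare_of_unipotent c Pm n hiterzero
  refine ⟨partA, ?_⟩
  intro hsurj
  have hchar : ringChar (ZMod p) ≠ 2 := by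
    rw [ZMod.ringChar_zmod_n]
    intro h2
    exact absurd (h2 ▸ hodd) (by decide)
  obtain ⟨a, ha⟩ := FiniteField.exists_nonsquare hchar
  have ha0 : a ≠ 0 := fun h0 => ha ⟨0, by rw [h0, mul_zero]⟩
  obtain ⟨U, hU⟩ := ZMod.unitsMap_surjective (n := p) (dvd_pow_self p hk.ne')
    (isUnit_iff_ne_zero.mpr ha0).unit
  obtain ⟨M, hM, hMsim⟩ := hsurj U
  have hsq := partA M hM U hMsim
  have hval : ZMod.castHom (dvd_pow_self p hk.ne') (ZMod p) (U : ZMod (p ^ k)) = a := by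
    have h16 := congrArg Units.val hU
    rw [ZMod.unitsMap_def] at h16
    simpa using h16
  rw [hval] at hsq
  exact ha hsq
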